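/- Let M, N be positive natural numbers and let d be a dataset of N instances with M binary protected attributes and a binary label. Suppose every vertex (level-0 hypercube) contains at least one instance, i.e. N(v) > 0 for every v : Fin M → Bool. Then the minimum success rate per level, SR_min(K) = min over all hypercubes x of level K of SR(x), is a monotonically increasing function of K: for every K with 1 ≤ K ≤ M, SR_min(K-1) ≤ SR_min(K). -/

import Mathlib

/-- An attribute vector `v` belongs to the hypercube `x` if it matches all specified coordinates. -/
def Belongs {M : ℕ} (x : Fin M → Option Bool) (v : Fin M → Bool) : Prop :=
  ∀ i : Fin M, ∀ b : Bool, x i = some b → v i = b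

instance {M : ℕ} (x : Fin M → Option Bool) (v : Fin M → Bool) : Decidable (Belongs x v) := by
  unfold Belongs; infer_instance

/-- The level of a hypercube: the number of its stars (unspecified coordinates). -/
def level {M : ℕ} (x : Fin M → Option Bool) : ℕ :=
  (Finset.univ.filter fun i => x i = none).card

/-- `cnt d x` = N(x): the number of instances of the dataset `d` belonging to `x`. -/
def cnt {M N : ℕ} (d : Fin N → (Fin M → Bool) × Bool) (x : Fin M → Option Bool) : ℕ :=
  (Finset.univ.filter fun n => Belongs x (d n).1).card

/-- `cnt1 d x` = N¹(x): the number of instances belonging to `x` with label `true`. -/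
def cnt1 {M N : ℕ} (d : Fin N → (Fin M → Bool) × Bool) (x : Fin M → Option Bool) : ℕ :=
  (Finset.univ.filter fun n => Belongs x (d n).1 ∧ (d n).2 = true).card

/-- The success rate SR(x) = N¹(x)/N(x). -/
def SR {M N : ℕ} (d : Fin N → (Fin M → Bool) × Bool) (x : Fin M → Option Bool) : ℚ :=
  (cnt1 d x : ℚ) / (cnt d x : ℚ)

/-- The finset of all hypercubes of level `K`. -/
def levelSet (M K : ℕ) : Finset (Fin M → Option Bool) :=
  Finset.univ.filter fun x => level x = K

/-- SR_min(K): minimum success rate over all hypercubes of level `K`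
(the level set is nonempty whenever `K ≤ M`, so the junk value `0` is never used there). -/
def SRmin {M N : ℕ} (d : Fin N → (Fin M → Bool) × Bool) (K : ℕ) : ℚ :=
  WithTop.untopD 0 (((levelSet M K).image (SR d)).min)

/-- SR_max(K): maximum success rate over all hypercubes of level `K`. -/
def SRmax {M N : ℕ} (d : Fin N → (Fin M → Bool) × Bool) (K : ℕ) : ℚ :=
  WithBot.unbotD 0 (((levelSet M K).image (SR d)).max)


lemma mediant (a0 a1 b0 b1 m : ℚ) (h0 : 0 < b0) (h1 : 0 < b1)
    (ha : m ≤ a0 / b0) (hb : m ≤ a1 / b1) : m ≤ (a0 + a1) / (b0 + b1) := by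
  rw [le_div_iff₀ h0] at ha
  rw [le_div_iff₀ h1] at hb
  rw [le_div_iff₀ (by linarith)]
  nlinarith

lemma belongs_update_iff {M : ℕ} (x : Fin M → Option Bool) (i : Fin M) (hi : x i = none)
    (b : Bool) (v : Fin M → Bool) :
    Belongs (Function.update x i (some b)) v ↔ Belongs x v ∧ v i = b := by
  constructor
  · intro h
    refine ⟨fun j c hj => ?_, h i b (by simp [Function.update])⟩
    have hji : j ≠ i := fun e => by rw [e, hi] at hj; cases hj
    exact h j c (by simpa [Function.update, hji])
  · rintro ⟨h, hv⟩ j c hj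
    by_cases hji : j = i
    · subst hji
      simp [Function.update] at hj
      rw [hv, hj]
    · exact h j c (by simpa [Function.update, hji] using hj)

lemma cnt_split {M N : ℕ} (d : Fin N → (Fin M → Bool) × Bool) (x : Fin M → Option Bool)
    (i : Fin M) (hi : x i = none) :
    cnt d x = cnt d (Function.update x i (some false)) + cnt d (Function.update x i (some true)) := by
  unfold cnt
  have h1 : ∀ b : Bool, (Finset.univ.filter fun n => Belongs (Function.update x i (some b)) (d n).1)
      = (Finset.univ.filter fun n => Belongs x (d n).1 ∧ (d n).1 i = b) := by
    intro b; apply Finset.filter_congr; intro n _; simp [belongs_update_iff x i hi]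
  rw [h1 false, h1 true]
  have := Finset.card_filter_add_card_filter_not
    (s := Finset.univ.filter fun n : Fin N => Belongs x (d n).1)
    (p := fun n => (d n).1 i = false)
  simp only [Finset.filter_filter, Bool.not_eq_false] at this
  omega

lemma cnt1_split {M N : ℕ} (d : Fin N → (Fin M → Bool) × Bool) (x : Fin M → Option Bool)
    (i : Fin M) (hi : x i = none) :
    cnt1 d x = cnt1 d (Function.update x i (some false)) + cnt1 d (Function.update x i (some true)) := by
  unfold cnt1
  have h1 : ∀ b : Bool, (Finset.univ.filter fun n => Belongs (Function.update x i (some b)) (d n).1 ∧ (d n).2 = true)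
      = (Finset.univ.filter fun n => (Belongs x (d n).1 ∧ (d n).2 = true) ∧ (d n).1 i = b) := by
    intro b; apply Finset.filter_congr; intro n _
    simp [belongs_update_iff x i hi]; tauto
  rw [h1 false, h1 true]
  have := Finset.card_filter_add_card_filter_not
    (s := Finset.univ.filter fun n : Fin N => Belongs x (d n).1 ∧ (d n).2 = true)
    (p := fun n => (d n).1 i = false)
  simp only [Finset.filter_filter, Bool.not_eq_false] at this
  omega

lemma cnt_pos {M N : ℕ} (d : Fin N → (Fin M → Bool) × Bool)
    (hvert : ∀ v : Fin M → Bool, 0 < cnt d (fun i => some (v i)))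
    (x : Fin M → Option Bool) : 0 < cnt d x := by
  set v : Fin M → Bool := fun i => (x i).getD false with hv
  have := hvert v
  rw [cnt, Finset.card_pos] at this ⊢
  obtain ⟨n, hn⟩ := this
  simp only [Finset.mem_filter, Finset.mem_univ, true_and] at hn
  refine ⟨n, Finset.mem_filter.mpr ⟨Finset.mem_univ _, fun j b hj => ?_⟩⟩
  have := hn j ((x j).getD false) rfl
  rw [this]; simp [hj]

lemma level_update {M : ℕ} (x : Fin M → Option Bool) (i : Fin M) (hi : x i = none) (b : Bool) :
    level (Function.update x i (some b)) = level x - 1 := by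
  unfold level
  have : (Finset.univ.filter fun j => Function.update x i (some b) j = none)
      = (Finset.univ.filter fun j => x j = none).erase i := by
    ext j
    simp only [Finset.mem_filter, Finset.mem_erase, Finset.mem_univ, true_and]
    by_cases hji : j = i
    · subst hji; simp [Function.update]
    · simp [Function.update, hji]
  rw [this]
  exact Finset.card_erase_of_mem (by simp [hi])


/-- If every vertex contains at least one instance, the minimum success
rate per level is monotonically increasing in the level. -/
theorem SRmin_mono (M N : ℕ) (hM : 0 < M) (hN : 0 < N)
    (d : Fin N → (Fin M → Bool) × Bool)
    (hvert : ∀ v : Fin M → Bool, 0 < cnt d (fun i => some (v i)))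
    (K : ℕ) (hK1 : 1 ≤ K) (hKM : K ≤ M) :
    SRmin d (K - 1) ≤ SRmin d K := by
  -- nonemptiness of level sets
  have hne : ∀ J : ℕ, J ≤ M → (levelSet M J).Nonempty := by
    intro J hJ
    refine ⟨fun i => if (i : ℕ) < J then none else some false, ?_⟩
    simp only [levelSet, Finset.mem_filter, Finset.mem_univ, true_and]; simp only [level]
    have : (Finset.univ.filter fun i : Fin M => (if (i : ℕ) < J then (none : Option Bool) else some false) = none)
        = Finset.univ.filter fun i : Fin M => (i : ℕ) < J := by
      apply Finset.filter_congr; intro i _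
      by_cases h : (i : ℕ) < J <;> simp [h]
    rw [this]
    rcases eq_or_lt_of_le hJ with h | h
    · subst h
      rw [Finset.filter_true_of_mem (fun i _ => i.isLt), Finset.card_univ, Fintype.card_fin]
    · have : (Finset.univ.filter fun i : Fin M => (i : ℕ) < J) = Finset.Iio ⟨J, h⟩ := by
        ext j; simp [Fin.lt_def]
      rw [this, Fin.card_Iio]
  -- lower bound: SRmin d J ≤ SR d y for y in levelSet
  have hlb : ∀ J : ℕ, J ≤ M → ∀ y ∈ levelSet M J, SRmin d J ≤ SR d y := by
    intro J hJ y hy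
    have hne' : ((levelSet M J).image (SR d)).Nonempty := (hne J hJ).image _
    rw [SRmin, ← Finset.coe_min' hne', WithTop.untopD_coe]
    exact Finset.min'_le _ _ (Finset.mem_image_of_mem _ hy)
  -- SRmin K is attained
  have hne' : ((levelSet M K).image (SR d)).Nonempty := (hne K hKM).image _
  have hmem := Finset.min'_mem _ hne'
  rw [Finset.mem_image] at hmem
  obtain ⟨x, hx, hxe⟩ := hmem
  have hSRminK : SRmin d K = SR d x := by
    rw [SRmin, ← Finset.coe_min' hne', WithTop.untopD_coe, ← hxe]
  rw [hSRminK]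
  -- x has a star
  have hlev : level x = K := by simpa [levelSet] using hx
  have : ∃ i : Fin M, x i = none := by
    have : (Finset.univ.filter fun i => x i = none).Nonempty := by
      rw [← Finset.card_pos, ← level]; omega
    obtain ⟨i, hi⟩ := this
    exact ⟨i, (Finset.mem_filter.mp hi).2⟩
  obtain ⟨i, hi⟩ := this
  set x0 := Function.update x i (some false) with hx0
  set x1 := Function.update x i (some true) with hx1
  have h0mem : x0 ∈ levelSet M (K - 1) := by
    simp [levelSet, hx0, level_update x i hi, hlev]
  have h1mem : x1 ∈ levelSet M (K - 1) := by
    simp [levelSet, hx1, level_update x i hi, hlev]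
  have hKM' : K - 1 ≤ M := by omega
  have hm0 := hlb (K - 1) hKM' x0 h0mem
  have hm1 := hlb (K - 1) hKM' x1 h1mem
  have hc : cnt d x = cnt d x0 + cnt d x1 := cnt_split d x i hi
  have hc1 : cnt1 d x = cnt1 d x0 + cnt1 d x1 := cnt1_split d x i hi
  have hp0 : 0 < cnt d x0 := cnt_pos d hvert x0
  have hp1 : 0 < cnt d x1 := cnt_pos d hvert x1
  rw [SR, hc, hc1]
  push_cast
  exact mediant _ _ _ _ _ (by exact_mod_cast hp0) (by exact_mod_cast hp1) hm0 hm1
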